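/- Let S ⊆ ℝⁿ, x ∈ ∂S, and suppose there exist a nonempty relatively open U ⊊ 𝕊ⁿ⁻¹ and a neighborhood O of 0 with (x + ℝ₊*·U) ∩ (x + O) ⊆ ℝⁿ \ S. Choose θ > 0 small enough that U' := {u ∈ U : Θ(u,v) > θ for all v ∈ 𝕊ⁿ⁻¹ \ U} is nonempty. Then for all e ∈ (x + ℝ₊*·U') ∩ (x + O) and all a ∈ S ∩ (x+O) \ {x}, the segment [e,a] meets the boundary of x + ℝ₊*·U at some point y, and Θ(e−x, a−x) = Θ(e−x, y−x) + Θ(y−x, a−x) ≥ θ. -/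

import Mathlib

open InnerProductGeometry

private lemma connected_meets_frontier {α : Type*} [TopologicalSpace α] {s C : Set α}
    (hs : IsPreconnected s) {p q : α} (hp : p ∈ s) (hq : q ∈ s) (hpC : p ∈ C) (hqC : q ∉ C) :
    ∃ y ∈ s, y ∈ frontier C := by
  by_contra h
  push_neg at h
  have hcover : s ⊆ interior C ∪ interior Cᶜ := by
    intro z hz
    have hzf : z ∉ frontier C := h z hz
    by_cases hzC : z ∈ closure C
    · left
      rw [frontier, Set.mem_diff, not_and, not_not] at hzf
      exact hzf hzC
    · right
      rw [interior_compl]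
      exact hzC
  have hpi : p ∈ interior C := by
    have : p ∈ closure C := subset_closure hpC
    have hpf := h p hp
    rw [frontier, Set.mem_diff, not_and, not_not] at hpf
    exact hpf this
  have hqi : q ∈ interior Cᶜ := by
    rcases hcover hq with h1 | h1
    · exact absurd (interior_subset h1) hqC
    · exact h1
  obtain ⟨z, hzs, hz1, hz2⟩ := hs (interior C) (interior Cᶜ) isOpen_interior isOpen_interior
    hcover ⟨p, hp, hpi⟩ ⟨q, hq, hqi⟩
  exact (interior_subset hz2) (interior_subset hz1)

private lemma angle_add_of_mem_segment {V : Type*} [NormedAddCommGroup V] [InnerProductSpace ℝ V]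
    {u w v : V} (hu : u ≠ 0) (hw : w ≠ 0) (hv : v ∈ segment ℝ u w) :
    angle u w = angle u v + angle v w := by
  have key : ∀ p q : V, EuclideanGeometry.angle p (0 : V) q = angle p q := by
    intro p q
    unfold EuclideanGeometry.angle
    rw [vsub_eq_sub, vsub_eq_sub, sub_zero, sub_zero]
  obtain ⟨s, t, hs, ht, hst, hrep⟩ := hv
  by_cases hvu : v = u
  · rw [hvu, angle_self hu, zero_add]
  by_cases hvw : v = w
  · rw [hvw, angle_self hw, add_zero]
  have hs0 : s ≠ 0 := by
    rintro rfl
    have ht1 : t = 1 := by linarith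
    rw [ht1, zero_smul, zero_add, one_smul] at hrep
    exact hvw hrep.symm
  have ht0 : t ≠ 0 := by
    rintro rfl
    have hs1 : s = 1 := by linarith
    rw [hs1, zero_smul, add_zero, one_smul] at hrep
    exact hvu hrep.symm
  have hspos : 0 < s := hs.lt_of_ne (Ne.symm hs0)
  have htpos : 0 < t := ht.lt_of_ne (Ne.symm ht0)
  by_cases hv0 : v = 0
  · have hw' : w = (-(s / t)) • u := by
      have h1 : t • w = -(s • u) := by
        have := hrep
        rw [hv0] at this
        rw [eq_neg_iff_add_eq_zero, add_comm]
        exact this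
      have h2 : w = t⁻¹ • (t • w) := by rw [smul_smul, inv_mul_cancel₀ ht0, one_smul]
      rw [h2, h1, smul_neg, smul_smul]
      rw [← neg_smul]
      congr 1
      field_simp
    rw [hv0, hw', angle_smul_right_of_neg u u (neg_neg_of_pos (div_pos hspos htpos)),
      angle_self_neg_of_nonzero hu, angle_zero_right, angle_zero_left]
    linarith
  -- nondegenerate case
  have hwbtw : Wbtw ℝ u v w := mem_segment_iff_wbtw.1 ⟨s, t, hs, ht, hst, hrep⟩
  have hsb : Sbtw ℝ u v w := ⟨hwbtw, hvu, hvw⟩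
  have hπ : EuclideanGeometry.angle u v w = Real.pi := hsb.angle₁₂₃_eq_pi
  have h1 := EuclideanGeometry.angle_add_angle_eq_pi_of_angle_eq_pi (0 : V) hπ
  have T1 := EuclideanGeometry.angle_add_angle_add_angle_eq_pi (p₁ := (0 : V)) (p₂ := u) (p₃ := v)
    hu
  have T2 := EuclideanGeometry.angle_add_angle_add_angle_eq_pi (p₁ := (0 : V)) (p₂ := w) (p₃ := v)
    hw
  have T3 := EuclideanGeometry.angle_add_angle_add_angle_eq_pi (p₁ := (0 : V)) (p₂ := u) (p₃ := w)
    hu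
  have hs1t : s = 1 - t := by linarith
  have E1 : EuclideanGeometry.angle (0 : V) u v = EuclideanGeometry.angle (0 : V) u w := by
    have hvu' : v -ᵥ u = t • (w -ᵥ u) := by
      rw [vsub_eq_sub, vsub_eq_sub, ← hrep, hs1t]
      module
    unfold EuclideanGeometry.angle
    rw [hvu', angle_smul_right_of_pos _ _ htpos]
  have E2 : EuclideanGeometry.angle (0 : V) w v = EuclideanGeometry.angle (0 : V) w u := by
    have hvw' : v -ᵥ w = s • (u -ᵥ w) := by
      rw [vsub_eq_sub, vsub_eq_sub, ← hrep, hs1t]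
      module
    unfold EuclideanGeometry.angle
    rw [hvw', angle_smul_right_of_pos _ _ hspos]
  have c1 := EuclideanGeometry.angle_comm u v (0 : V)
  have c2 := EuclideanGeometry.angle_comm w v (0 : V)
  have c3 := EuclideanGeometry.angle_comm v (0 : V) u
  have c4 := EuclideanGeometry.angle_comm w (0 : V) u
  have c5 := EuclideanGeometry.angle_comm u w (0 : V)
  have goal' : EuclideanGeometry.angle u (0 : V) w
      = EuclideanGeometry.angle u (0 : V) v + EuclideanGeometry.angle v (0 : V) w := by
    linarith
  rw [key, key, key] at goal'
  exact goal'

/-- Construction of the angle bound in the proof that the interior cone property of the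
complement implies the Vicente–Custódio exterior cone property. -/
theorem angle_bound_from_cone {n : ℕ}
    (S : Set (EuclideanSpace ℝ (Fin n))) (x : EuclideanSpace ℝ (Fin n))
    (hx : x ∈ frontier S)
    (U : Set (EuclideanSpace ℝ (Fin n)))
    (hUne : U.Nonempty) (hUsub : U ⊆ Metric.sphere 0 1)
    (hUne' : U ≠ Metric.sphere 0 1)
    (hUopen : ∃ V, IsOpen V ∧ U = V ∩ Metric.sphere 0 1)
    (O : Set (EuclideanSpace ℝ (Fin n))) (hO : IsOpen O)
    (h0O : (0 : EuclideanSpace ℝ (Fin n)) ∈ O)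
    (hcone : {z | ∃ l : ℝ, 0 < l ∧ ∃ u ∈ U, z = x + l • u} ∩ {z | z - x ∈ O} ⊆ Sᶜ)
    (θ : ℝ) (hθ : 0 < θ)
    (U' : Set (EuclideanSpace ℝ (Fin n)))
    (hU' : U' = {u | u ∈ U ∧ ∀ v ∈ Metric.sphere (0 : EuclideanSpace ℝ (Fin n)) 1 \ U,
      θ < angle u v})
    (hU'ne : U'.Nonempty) :
    ∀ e ∈ {z | ∃ l : ℝ, 0 < l ∧ ∃ u ∈ U', z = x + l • u} ∩ {z | z - x ∈ O},
      ∀ a ∈ (S ∩ {z | z - x ∈ O}) \ {x},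
        ∃ y ∈ segment ℝ e a ∩ frontier {z | ∃ l : ℝ, 0 < l ∧ ∃ u ∈ U, z = x + l • u},
          angle (e - x) (a - x) = angle (e - x) (y - x) + angle (y - x) (a - x) ∧
          θ ≤ angle (e - x) (a - x) := by
  intro e he a ha
  obtain ⟨⟨l, hl, u', hu'U', he'⟩, heO⟩ := he
  obtain ⟨⟨haS, haO⟩, hax⟩ := ha
  have hax' : a ≠ x := hax
  rw [hU'] at hu'U'
  obtain ⟨hu'U, hu'ang⟩ := hu'U'
  have heC : e ∈ {z | ∃ l : ℝ, 0 < l ∧ ∃ u ∈ U, z = x + l • u} := ⟨l, hl, u', hu'U, he'⟩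
  have haC : a ∉ {z | ∃ l : ℝ, 0 < l ∧ ∃ u ∈ U, z = x + l • u} := fun h => hcone ⟨h, haO⟩ haS
  obtain ⟨y, hyseg, hyfr⟩ := connected_meets_frontier (convex_segment e a).isPreconnected
    (left_mem_segment ℝ e a) (right_mem_segment ℝ e a) heC haC
  have hu'norm : ‖u'‖ = 1 := by
    have := hUsub hu'U
    rwa [Metric.mem_sphere, dist_zero_right] at this
  have hex : e - x ≠ 0 := by
    rw [he', add_sub_cancel_left]
    intro h
    have : ‖l • u'‖ = 0 := by rw [h, norm_zero]
    rw [norm_smul, hu'norm, mul_one, Real.norm_eq_abs, abs_of_pos hl] at this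
    linarith
  have hax0 : a - x ≠ 0 := sub_ne_zero.2 hax'
  have hyseg' : y - x ∈ segment ℝ (e - x) (a - x) := by
    obtain ⟨s, t, hs, ht, hst, hy⟩ := hyseg
    refine ⟨s, t, hs, ht, hst, ?_⟩
    have : s • (e - x) + t • (a - x) = s • e + t • a - (s + t) • x := by module
    rw [this, hst, one_smul, hy]
  have hnv : (0 : ℝ) < ‖a - x‖ := norm_pos_iff.2 hax0
  set v : EuclideanSpace ℝ (Fin n) := ‖a - x‖⁻¹ • (a - x) with hvdef
  have hv1 : v ∈ Metric.sphere (0 : EuclideanSpace ℝ (Fin n)) 1 := by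
    rw [Metric.mem_sphere, dist_zero_right, hvdef, norm_smul, Real.norm_eq_abs,
      abs_of_pos (inv_pos.2 hnv), inv_mul_cancel₀ (ne_of_gt hnv)]
  have hvU : v ∉ U := by
    intro hvU
    apply haC
    refine ⟨‖a - x‖, hnv, v, hvU, ?_⟩
    rw [hvdef, smul_smul, mul_inv_cancel₀ (ne_of_gt hnv), one_smul]
    abel
  have hθ' : θ < angle u' v := hu'ang v ⟨hv1, hvU⟩
  have hang : angle (e - x) (a - x) = angle u' v := by
    rw [he', add_sub_cancel_left, angle_smul_left_of_pos _ _ hl, hvdef,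
      angle_smul_right_of_pos _ _ (inv_pos.2 hnv)]
  exact ⟨y, ⟨hyseg, hyfr⟩, angle_add_of_mem_segment hex hax0 hyseg',
    by rw [hang]; linarith⟩
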